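/- Fix a real α > 1 and let F(x) = exp(−x^{−α}) and f(x) = α x^{−(α+1)} exp(−x^{−α}) for x > 0 be the Fréchet CDF and density. Then for every λ_i ≥ 0 and all natural numbers p, q, one has [∫_0^∞ (f(z+λ_i)/(z+λ_i)) (1 − F(z+λ_i))^p F(z+λ_i)^q dz] / [∫_0^∞ f(z+λ_i) (1 − F(z+λ_i))^p F(z+λ_i)^q dz] ≤ [∫_0^∞ (f(z+λ_i)/(z+λ_i)^{αp+1}) F(z+λ_i)^q dz] / [∫_0^∞ (f(z+λ_i)/(z+λ_i)^{αp}) F(z+λ_i)^q dz]. -/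
import Mathlib


open MeasureTheory Set

/-- `(1 - e^{-s})/s` is antitone on `(0, ∞)`. -/
lemma phi_anti {t s : ℝ} (ht : 0 < t) (hts : t ≤ s) :
    (1 - Real.exp (-s)) * s⁻¹ ≤ (1 - Real.exp (-t)) * t⁻¹ := by
  have hs : 0 < s := ht.trans_le hts
  rw [← div_eq_mul_inv, ← div_eq_mul_inv, div_le_div_iff₀ hs ht]
  have e1 : 1 + t ≤ Real.exp t := by have := Real.add_one_le_exp t; linarith
  have e2 : 1 - (s - t) ≤ Real.exp (-(s - t)) := by
    have := Real.add_one_le_exp (-(s - t)); linarith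
  have e3 : Real.exp (-s) = Real.exp (-t) * Real.exp (-(s - t)) := by
    rw [← Real.exp_add]; ring_nf
  have e4 : Real.exp (-t) * Real.exp t = 1 := by rw [← Real.exp_add]; simp
  have p1 : (0:ℝ) < Real.exp (-t) := Real.exp_pos _
  have p2 : (0:ℝ) < Real.exp t := Real.exp_pos _
  -- goal : (1 - exp (-s)) * t ≤ (1 - exp (-t)) * s
  have h5 : t * Real.exp (-t) * (1 - Real.exp (-(s - t))) ≤ t * Real.exp (-t) * (s - t) := by
    apply mul_le_mul_of_nonneg_left (by linarith) (by positivity)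
  have h6 : t * Real.exp (-t) ≤ 1 - Real.exp (-t) := by
    nlinarith
  have h7 : t * Real.exp (-t) * (s - t) ≤ (1 - Real.exp (-t)) * (s - t) :=
    mul_le_mul_of_nonneg_right h6 (by linarith)
  nlinarith [h5, h7]

/-- Monotonicity of `(1 - e^{-x^{-α}})^p x^{αp}` on `(0, ∞)`. -/
lemma G_mono {α : ℝ} (hα : 0 < α) (p : ℕ) {x y : ℝ} (hx : 0 < x) (hxy : x ≤ y) :
    (1 - Real.exp (-(x ^ (-α)))) ^ p * x ^ (α * (p : ℝ)) ≤
      (1 - Real.exp (-(y ^ (-α)))) ^ p * y ^ (α * (p : ℝ)) := by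
  have hy : 0 < y := hx.trans_le hxy
  have hs : 0 < x ^ (-α) := Real.rpow_pos_of_pos hx _
  have ht : 0 < y ^ (-α) := Real.rpow_pos_of_pos hy _
  have hts : y ^ (-α) ≤ x ^ (-α) := by
    rw [Real.rpow_neg hx.le, Real.rpow_neg hy.le]
    exact inv_anti₀ (Real.rpow_pos_of_pos hx α)
      (Real.rpow_le_rpow hx.le hxy hα.le)
  have hxrw : ∀ w : ℝ, 0 < w →
      (1 - Real.exp (-(w ^ (-α)))) ^ p * w ^ (α * (p : ℝ)) =
        ((1 - Real.exp (-(w ^ (-α)))) * (w ^ (-α))⁻¹) ^ p := by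
    intro w hw
    have : w ^ (α * (p : ℝ)) = ((w ^ (-α))⁻¹) ^ p := by
      rw [Real.rpow_neg hw.le, inv_inv, ← Real.rpow_natCast (w ^ α) p,
        ← Real.rpow_mul hw.le]
    rw [this, mul_pow]
  rw [hxrw x hx, hxrw y hy]
  apply pow_le_pow_left₀
  · have h1 : Real.exp (-(x ^ (-α))) ≤ 1 := Real.exp_le_one_iff.mpr (by linarith)
    exact mul_nonneg (by linarith) (inv_nonneg.mpr hs.le)
  · exact phi_anti ht hts

/-- Chebyshev's integral correlation inequality on `(0,∞)` for a nonnegative weight `h`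
and anti-monovarying `g`, `u`. -/
lemma cheby {h g u : ℝ → ℝ}
    (hh : ∀ x ∈ Ioi (0:ℝ), 0 ≤ h x)
    (hmono : ∀ x ∈ Ioi (0:ℝ), ∀ y ∈ Ioi (0:ℝ), (g x - g y) * (u x - u y) ≤ 0)
    (i1 : IntegrableOn (fun z => h z * g z * u z) (Ioi 0))
    (i2 : IntegrableOn (fun z => h z * g z) (Ioi 0))
    (i3 : IntegrableOn (fun z => h z * u z) (Ioi 0))
    (i4 : IntegrableOn h (Ioi 0)) :
    (∫ z in Ioi (0:ℝ), h z * g z * u z) * (∫ z in Ioi (0:ℝ), h z) ≤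
    (∫ z in Ioi (0:ℝ), h z * u z) * (∫ z in Ioi (0:ℝ), h z * g z) := by
  set μ := volume.restrict (Ioi (0:ℝ)) with hμ
  have I1 : Integrable (fun w : ℝ × ℝ => (h w.1 * g w.1 * u w.1) * h w.2) (μ.prod μ) :=
    i1.mul_prod i4
  have I2 : Integrable (fun w : ℝ × ℝ => (h w.1 * g w.1) * (h w.2 * u w.2)) (μ.prod μ) :=
    i2.mul_prod i3
  have I3 : Integrable (fun w : ℝ × ℝ => (h w.1 * u w.1) * (h w.2 * g w.2)) (μ.prod μ) :=
    i3.mul_prod i2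
  have I4 : Integrable (fun w : ℝ × ℝ => h w.1 * (h w.2 * g w.2 * u w.2)) (μ.prod μ) :=
    i4.mul_prod i1
  have hKle :
      ∫ w : ℝ × ℝ, ((h w.1 * g w.1 * u w.1) * h w.2 + h w.1 * (h w.2 * g w.2 * u w.2))
          ∂(μ.prod μ) ≤
      ∫ w : ℝ × ℝ, ((h w.1 * g w.1) * (h w.2 * u w.2) + (h w.1 * u w.1) * (h w.2 * g w.2))
          ∂(μ.prod μ) := by
    apply integral_mono_ae (I1.add I4) (I2.add I3)
    have hprod : μ.prod μ = (volume.prod volume).restrict ((Ioi (0:ℝ)) ×ˢ (Ioi (0:ℝ))) :=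
      Measure.prod_restrict _ _
    rw [hprod]
    filter_upwards [ae_restrict_mem (measurableSet_Ioi.prod measurableSet_Ioi)] with w hw
    obtain ⟨hw1, hw2⟩ := hw
    have key := hmono w.1 hw1 w.2 hw2
    have hnn : 0 ≤ h w.1 * h w.2 := mul_nonneg (hh w.1 hw1) (hh w.2 hw2)
    have := mul_nonpos_of_nonneg_of_nonpos hnn key
    simp only [Pi.add_apply]
    nlinarith [this]
  rw [integral_add I1 I4, integral_add I2 I3] at hKle
  have E1 : ∫ w : ℝ × ℝ, h w.1 * g w.1 * u w.1 * h w.2 ∂(μ.prod μ) =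
      (∫ z, h z * g z * u z ∂μ) * ∫ z, h z ∂μ :=
    integral_prod_mul (fun x => h x * g x * u x) h
  have E2 : ∫ w : ℝ × ℝ, h w.1 * g w.1 * (h w.2 * u w.2) ∂(μ.prod μ) =
      (∫ z, h z * g z ∂μ) * ∫ z, h z * u z ∂μ :=
    integral_prod_mul (fun x => h x * g x) (fun x => h x * u x)
  have E3 : ∫ w : ℝ × ℝ, h w.1 * u w.1 * (h w.2 * g w.2) ∂(μ.prod μ) =
      (∫ z, h z * u z ∂μ) * ∫ z, h z * g z ∂μ :=
    integral_prod_mul (fun x => h x * u x) (fun x => h x * g x)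
  have E4 : ∫ w : ℝ × ℝ, h w.1 * (h w.2 * g w.2 * u w.2) ∂(μ.prod μ) =
      (∫ z, h z ∂μ) * ∫ z, h z * g z * u z ∂μ :=
    integral_prod_mul h (fun x => h x * g x * u x)
  rw [E1, E2, E3, E4] at hKle
  linarith

theorem stmt3 (α : ℝ) (hα : 1 < α) (li : ℝ) (hli : 0 ≤ li) (p q : ℕ)
    (F f : ℝ → ℝ)
    (hF : ∀ x, 0 < x → F x = Real.exp (-(x ^ (-α))))
    (hf : ∀ x, 0 < x → f x = α * x ^ (-(α + 1)) * Real.exp (-(x ^ (-α))))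
    (h1 : IntegrableOn
      (fun z => f (z + li) / (z + li) * (1 - F (z + li)) ^ p * F (z + li) ^ q) (Ioi 0))
    (h2 : IntegrableOn
      (fun z => f (z + li) * (1 - F (z + li)) ^ p * F (z + li) ^ q) (Ioi 0))
    (h3 : IntegrableOn
      (fun z => f (z + li) / (z + li) ^ (α * (p : ℝ) + 1) * F (z + li) ^ q) (Ioi 0))
    (h4 : IntegrableOn
      (fun z => f (z + li) / (z + li) ^ (α * (p : ℝ)) * F (z + li) ^ q) (Ioi 0))
    (h2pos : 0 < ∫ z in Ioi (0:ℝ), f (z + li) * (1 - F (z + li)) ^ p * F (z + li) ^ q)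
    (h4pos : 0 < ∫ z in Ioi (0:ℝ), f (z + li) / (z + li) ^ (α * (p : ℝ)) * F (z + li) ^ q) :
    (∫ z in Ioi (0:ℝ), f (z + li) / (z + li) * (1 - F (z + li)) ^ p * F (z + li) ^ q) /
      (∫ z in Ioi (0:ℝ), f (z + li) * (1 - F (z + li)) ^ p * F (z + li) ^ q) ≤
    (∫ z in Ioi (0:ℝ), f (z + li) / (z + li) ^ (α * (p : ℝ) + 1) * F (z + li) ^ q) /
      (∫ z in Ioi (0:ℝ), f (z + li) / (z + li) ^ (α * (p : ℝ)) * F (z + li) ^ q) := by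
  set h : ℝ → ℝ := fun z => f (z + li) / (z + li) ^ (α * (p : ℝ)) * F (z + li) ^ q with hh_def
  set g : ℝ → ℝ := fun z => (1 - F (z + li)) ^ p * (z + li) ^ (α * (p : ℝ)) with hg_def
  set u : ℝ → ℝ := fun z => (z + li)⁻¹ with hu_def
  have hx : ∀ z ∈ Ioi (0:ℝ), 0 < z + li := fun z hz => by
    have : (0:ℝ) < z := hz; linarith
  -- pointwise identities on (0, ∞)
  have eq1 : EqOn (fun z => f (z + li) / (z + li) * (1 - F (z + li)) ^ p * F (z + li) ^ q)
      (fun z => h z * g z * u z) (Ioi 0) := by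
    intro z hz
    have hzp := hx z hz
    have hrp : (0:ℝ) < (z + li) ^ (α * (p : ℝ)) := Real.rpow_pos_of_pos hzp _
    simp only [hh_def, hg_def, hu_def]
    field_simp
    try ring
  have eq2 : EqOn (fun z => f (z + li) * (1 - F (z + li)) ^ p * F (z + li) ^ q)
      (fun z => h z * g z) (Ioi 0) := by
    intro z hz
    have hzp := hx z hz
    have hrp : (0:ℝ) < (z + li) ^ (α * (p : ℝ)) := Real.rpow_pos_of_pos hzp _
    simp only [hh_def, hg_def]
    field_simp
    try ring
  have eq3 : EqOn (fun z => f (z + li) / (z + li) ^ (α * (p : ℝ) + 1) * F (z + li) ^ q)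
      (fun z => h z * u z) (Ioi 0) := by
    intro z hz
    have hzp := hx z hz
    have hrp : (0:ℝ) < (z + li) ^ (α * (p : ℝ)) := Real.rpow_pos_of_pos hzp _
    have hre : (z + li) ^ (α * (p : ℝ) + 1) = (z + li) ^ (α * (p : ℝ)) * (z + li) := by
      rw [Real.rpow_add hzp, Real.rpow_one]
    simp only [hh_def, hu_def]
    rw [hre]
    field_simp
    try ring
  -- nonnegativity of h
  have hhnn : ∀ z ∈ Ioi (0:ℝ), 0 ≤ h z := by
    intro z hz
    have hzp := hx z hz
    have hfpos : 0 < f (z + li) := by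
      rw [hf _ hzp]
      have := Real.rpow_pos_of_pos hzp (-(α + 1))
      have := Real.exp_pos (-((z + li) ^ (-α)))
      positivity
    have hFpos : 0 < F (z + li) := by
      rw [hF _ hzp]; exact Real.exp_pos _
    have hrp : (0:ℝ) < (z + li) ^ (α * (p : ℝ)) := Real.rpow_pos_of_pos hzp _
    simp only [hh_def]
    positivity
  -- anti-monovariance of g and u
  have hmono : ∀ x ∈ Ioi (0:ℝ), ∀ y ∈ Ioi (0:ℝ), (g x - g y) * (u x - u y) ≤ 0 := by
    intro x hxm y hym
    have hxp := hx x hxm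
    have hyp := hx y hym
    have hgF : ∀ z ∈ Ioi (0:ℝ), g z =
        (1 - Real.exp (-((z + li) ^ (-α)))) ^ p * (z + li) ^ (α * (p : ℝ)) := by
      intro z hz
      simp only [hg_def, hF _ (hx z hz)]
    rw [hgF x hxm, hgF y hym]
    simp only [hu_def]
    rcases le_total x y with hxy | hxy
    · apply mul_nonpos_of_nonpos_of_nonneg
      · have := G_mono (by linarith : (0:ℝ) < α) p hxp (by linarith : x + li ≤ y + li)
        linarith
      · have : (y + li)⁻¹ ≤ (x + li)⁻¹ := inv_anti₀ hxp (by linarith)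
        linarith
    · apply mul_nonpos_of_nonneg_of_nonpos
      · have := G_mono (by linarith : (0:ℝ) < α) p hyp (by linarith : y + li ≤ x + li)
        linarith
      · have : (x + li)⁻¹ ≤ (y + li)⁻¹ := inv_anti₀ hyp (by linarith)
        linarith
  -- transfer integrability
  have i1 : IntegrableOn (fun z => h z * g z * u z) (Ioi 0) :=
    h1.congr_fun eq1 measurableSet_Ioi
  have i2 : IntegrableOn (fun z => h z * g z) (Ioi 0) :=
    h2.congr_fun eq2 measurableSet_Ioi
  have i3 : IntegrableOn (fun z => h z * u z) (Ioi 0) :=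
    h3.congr_fun eq3 measurableSet_Ioi
  have i4 : IntegrableOn h (Ioi 0) := h4
  -- rewrite the integrals
  rw [setIntegral_congr_fun measurableSet_Ioi eq1, setIntegral_congr_fun measurableSet_Ioi eq2,
    setIntegral_congr_fun measurableSet_Ioi eq3] 
  rw [setIntegral_congr_fun measurableSet_Ioi eq2] at h2pos
  have key := cheby hhnn hmono i1 i2 i3 i4
  rw [div_le_div_iff₀ h2pos h4pos]
  exact key
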